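/- Suppose e^{2ε} ≥ p_max/p_min or p_max = 1/(2m). Let λ_vl* = 0 and λ_gr* = 2m(k−1)·p_max / (2m(k−1)·p_max + e^ε). Then (λ_gr*, λ_vl*) belongs to the feasible set F_ε and β₃(λ_gr*, λ_vl*) ≤ β₃(λ_gr, λ_vl) for every (λ_gr, λ_vl) ∈ F_ε; that is, these parameters guarantee privacy level ε and minimize the relative error of the RG scheme. (Corollary 1, second case.) -/

import Mathlib

open scoped BigOperators

noncomputable section

/-- The value alphabet `V = {±1, …, ±m} ⊆ ℤ`. -/
def Vset (m : ℕ) : Finset ℤ := (Finset.Icc (-(m : ℤ)) m).erase 0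

/-- Values as a (finite) type. -/
abbrev Vt (m : ℕ) : Type := {v : ℤ // v ∈ Vset m}

/-- Query matrices: `k × 2m` matrices whose rows are permutations of `V`,
encoded row-wise as equivalences between column indices and values. -/
abbrev Query (k m : ℕ) : Type := Fin k → (Fin (2*m) ≃ Vt m)

/-- The randomized response channel `RR_λ` on `V`: probability that input `v`
is turned into output `w`. -/
def RR (m : ℕ) (lam : ℝ) (v w : Vt m) : ℝ :=
  if w = v then 1 - lam else lam / (2*m - 1)
/-- `β₁ = 2m(k−1)(1−λ_gr)/((2m−1)λ_gr)`. -/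
def B1 (k m : ℕ) (lgr : ℝ) : ℝ := 2*m*((k : ℝ) - 1)*(1 - lgr) / ((2*m - 1)*lgr)

/-- `β₂ = 2m(1−λ_vl) − 1`. -/
def B2 (m : ℕ) (lvl : ℝ) : ℝ := 2*m*(1 - lvl) - 1

/-- The relative-error coefficient `β₃` of the RG scheme (its relative error
times `n`), with `c = E[V²]`. -/
def B3 (k m : ℕ) (c lgr lvl : ℝ) : ℝ :=
  c * ((2*m - 1) / ((1 - lgr) * B2 m lvl) - 1)
    + (4*m^2 - 1) * (m + 1) * (2*m*lvl*(1 - lgr) + lgr*(2*m - 1))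
        / (6 * (1 - lgr)^2 * (B2 m lvl)^2)

/-- The feasible set `F_ε`: pairs `(λ_gr, λ_vl)` of RG parameters whose
privacy level `max{β₁(p_max·β₂+λ_vl), 1/(β₁(p_min·β₂+λ_vl))}` equals `e^ε`. -/
def Feas (k m : ℕ) (pmax pmin ε : ℝ) : Set (ℝ × ℝ) :=
  {x | x.1 ∈ Set.Ioo (0:ℝ) 1 ∧ x.2 ∈ Set.Ico (0:ℝ) (1 - 1/(2*m)) ∧
    max (B1 k m x.1 * (pmax * B2 m x.2 + x.2))
        (1 / (B1 k m x.1 * (pmin * B2 m x.2 + x.2))) = Real.exp ε}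

set_option maxHeartbeats 1000000

lemma core_ineq (a A kk c K D u s B : ℝ)
    (hc : 0 ≤ c) (hK : 0 ≤ K) (ha : 1 < a) (hA : 0 < A) (hkk : 1 ≤ kk)
    (hD : 1 ≤ D) (hu0 : 0 < u) (hu1 : u < 1) (hs : 0 ≤ s)
    (hBdef : B = D - s) (hB0 : 0 < B)
    (h1 : u * (A*B + kk*s) ≤ a*D*(1-u)) :
    c*(A/a) + K*((1+A/a)*(A/a))/(6*D)
      ≤ c*(D/(u*B) - 1) + K*(s*u + (1-u)*D)/(6*(u^2*B^2)) := by
  have ha0 : (0:ℝ) < a := by linarith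
  have hD0 : (0:ℝ) < D := by linarith
  have huB : 0 < u*B := mul_pos hu0 hB0
  have hBD : B ≤ D := by rw [hBdef]; linarith
  have hkk0 : (0:ℝ) ≤ kk := by linarith
  have hR0 : (0:ℝ) ≤ A*B + kk*s := by positivity
  -- term (i)
  have hi1 : (A+a)*(u*B) ≤ D*a := by
    nlinarith [mul_le_mul_of_nonneg_left hBD (by positivity : (0:ℝ) ≤ a*u),
      mul_nonneg (mul_nonneg hu0.le hkk0) hs]
  have hi : c*(A/a) ≤ c*(D/(u*B) - 1) := by
    apply mul_le_mul_of_nonneg_left _ hc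
    have h2 : (A+a)/a ≤ D/(u*B) := by
      rw [div_le_div_iff₀ ha0 huB]; nlinarith [hi1]
    have h3 : A/a + 1 = (A+a)/a := by field_simp
    linarith
  -- term (ii)
  have key4 : (a+A)*(A*B^2) ≤ (a*s + (A*B + kk*s)) * ((A*B + kk*s) + a*D) := by
    nlinarith [sq_nonneg (kk*s), mul_nonneg (mul_nonneg ha0.le hs) hR0,
      mul_nonneg (mul_nonneg (mul_nonneg ha0.le ha0.le) hs) hD0.le,
      mul_le_mul_of_nonneg_left hBD (by positivity : (0:ℝ) ≤ a*(A*B)),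
      mul_nonneg (mul_nonneg (mul_nonneg ha0.le hkk0) hs) hD0.le,
      mul_nonneg (mul_nonneg hkk0 hs) (mul_nonneg hA.le hB0.le)]
  have hu2 : u*((A*B+kk*s) + a*D) ≤ a*D := by nlinarith [h1]
  have key2 : u*((a+A)*(A*B^2)) ≤ (a*s + (A*B+kk*s)) * (a*D) := by
    calc u*((a+A)*(A*B^2)) ≤ u*((a*s + (A*B + kk*s)) * ((A*B + kk*s) + a*D)) :=
          mul_le_mul_of_nonneg_left key4 hu0.le
      _ = (a*s + (A*B+kk*s)) * (u*((A*B+kk*s) + a*D)) := by ring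
      _ ≤ (a*s + (A*B+kk*s)) * (a*D) := by
          apply mul_le_mul_of_nonneg_left hu2 (by positivity)
  have goalpoly : (a+A)*A*(u^2*B^2) ≤ a^2*((s*u+(1-u)*D)*D) := by
    have k1 : u*(u*((a+A)*(A*B^2))) ≤ u*((a*s + (A*B+kk*s)) * (a*D)) :=
      mul_le_mul_of_nonneg_left key2 hu0.le
    have k2 : (a*D)*(u*(A*B+kk*s)) ≤ (a*D)*(a*D*(1-u)) :=
      mul_le_mul_of_nonneg_left h1 (by positivity)
    nlinarith [k1, k2]
  have hii : K*((1+A/a)*(A/a))/(6*D) ≤ K*(s*u + (1-u)*D)/(6*(u^2*B^2)) := by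
    rw [div_le_div_iff₀ (by positivity) (by positivity)]
    have hX : ((1+A/a)*(A/a)) * (u^2*B^2) ≤ (s*u+(1-u)*D)*D := by
      have e : (1+A/a)*(A/a) = (a+A)*A/a^2 := by field_simp
      rw [e, div_mul_eq_mul_div, div_le_iff₀ (by positivity : (0:ℝ) < a^2)]
      nlinarith [goalpoly]
    have hscaled := mul_le_mul_of_nonneg_left hX (by positivity : (0:ℝ) ≤ 6*K)
    linarith [hscaled]
  linarith [hi, hii]


lemma Vset_card (m : ℕ) (hm : 0 < m) : (Vset m).card = 2*m := by
  rw [Vset, Finset.card_erase_of_mem, Int.card_Icc]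
  · have : ((m:ℤ) + 1 - -(m:ℤ)) = 2*m + 1 := by ring
    rw [this]
    omega
  · simp only [Finset.mem_Icc]
    omega


lemma B3_min (m k : ℕ) (c P a lgr lvl lgrs : ℝ)
    (hm : 1 ≤ (m:ℝ)) (hk : 2 ≤ (k:ℝ))
    (hc : 0 ≤ c) (hP : 0 < P) (ha : 1 < a)
    (hg0 : 0 < lgr) (hg1 : lgr < 1) (hv0 : 0 ≤ lvl) (hv1 : lvl < 1 - 1/(2*(m:ℝ)))
    (hgs : lgrs = 2*(m:ℝ)*((k:ℝ)-1)*P / (2*(m:ℝ)*((k:ℝ)-1)*P + a))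
    (hcon : B1 k m lgr * (P * B2 m lvl + lvl) ≤ a) :
    B3 k m c lgrs 0 ≤ B3 k m c lgr lvl := by
  have ha0 : (0:ℝ) < a := by linarith
  have hkk : (1:ℝ) ≤ (k:ℝ) - 1 := by linarith
  have hD1 : (1:ℝ) ≤ 2*(m:ℝ) - 1 := by linarith
  have hD0 : (0:ℝ) < 2*(m:ℝ) - 1 := by linarith
  have hA : (0:ℝ) < 2*(m:ℝ)*((k:ℝ)-1)*P := mul_pos (mul_pos (by linarith) (by linarith)) hP
  have hu0 : (0:ℝ) < 1 - lgr := by linarith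
  have hs0 : (0:ℝ) ≤ 2*(m:ℝ)*lvl := by positivity
  have hB0 : (0:ℝ) < 2*(m:ℝ) - 1 - 2*(m:ℝ)*lvl := by
    have : 2*(m:ℝ)*lvl < 2*(m:ℝ)*(1 - 1/(2*(m:ℝ))) := by
      apply mul_lt_mul_of_pos_left hv1 (by linarith)
    have e : 2*(m:ℝ)*(1 - 1/(2*(m:ℝ))) = 2*(m:ℝ) - 1 := by
      field_simp
    linarith [this, e ▸ this]
  have hB2 : B2 m lvl = 2*(m:ℝ) - 1 - 2*(m:ℝ)*lvl := by rw [B2]; ring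
  have hB2pos : 0 < B2 m lvl := by rw [hB2]; exact hB0
  have hK0 : (0:ℝ) ≤ (4*(m:ℝ)^2 - 1)*((m:ℝ)+1) := by nlinarith
  -- constraint
  have h1 : (1-lgr) * ((2*(m:ℝ)*((k:ℝ)-1)*P)*(2*(m:ℝ) - 1 - 2*(m:ℝ)*lvl)
      + ((k:ℝ)-1)*(2*(m:ℝ)*lvl)) ≤ a*(2*(m:ℝ)-1)*(1-(1-lgr)) := by
    rw [B1, B2] at hcon
    rw [div_mul_eq_mul_div, div_le_iff₀ (by positivity)] at hcon
    nlinarith [hcon]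
  have hcore := core_ineq a (2*(m:ℝ)*((k:ℝ)-1)*P) ((k:ℝ)-1) c
      ((4*(m:ℝ)^2 - 1)*((m:ℝ)+1)) (2*(m:ℝ)-1) (1-lgr) (2*(m:ℝ)*lvl)
      (2*(m:ℝ) - 1 - 2*(m:ℝ)*lvl)
      hc hK0 ha hA hkk hD1 hu0 (by linarith) hs0 (by ring) hB0 h1
  have hApa : (0:ℝ) < 2*(m:ℝ)*((k:ℝ)-1)*P + a := by linarith
  have hLHS : B3 k m c lgrs 0 = c*((2*(m:ℝ)*((k:ℝ)-1)*P)/a)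
      + ((4*(m:ℝ)^2 - 1)*((m:ℝ)+1))*((1+(2*(m:ℝ)*((k:ℝ)-1)*P)/a)*((2*(m:ℝ)*((k:ℝ)-1)*P)/a))/(6*(2*(m:ℝ)-1)) := by
    rw [B3, B2, hgs]
    have h2 : (1 : ℝ) - 2*(m:ℝ)*((k:ℝ)-1)*P / (2*(m:ℝ)*((k:ℝ)-1)*P + a)
        = a / (2*(m:ℝ)*((k:ℝ)-1)*P + a) := by field_simp; ring
    rw [h2]
    field_simp [ne_of_gt hD0, ne_of_gt ha0, ne_of_gt hApa]
    ring
  have hRHS : B3 k m c lgr lvl = c*((2*(m:ℝ)-1)/((1-lgr)*(2*(m:ℝ) - 1 - 2*(m:ℝ)*lvl)) - 1)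
      + ((4*(m:ℝ)^2 - 1)*((m:ℝ)+1))*((2*(m:ℝ)*lvl)*(1-lgr) + (1-(1-lgr))*(2*(m:ℝ)-1))/(6*((1-lgr)^2*(2*(m:ℝ) - 1 - 2*(m:ℝ)*lvl)^2)) := by
    rw [B3, hB2]
    ring
  rw [hLHS, hRHS]
  exact hcore


/-- Corollary 1, second case: if `e^{2ε} ≥ p_max/p_min` or
`p_max = 1/(2m)`, then with `λ_vl* = 0` and
`λ_gr* = 2m(k−1)p_max/(2m(k−1)p_max + e^ε)`, the pair `(λ_gr*, λ_vl*)` is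
feasible (guarantees privacy level `ε`) and minimizes the relative error
`β₃` of the RG scheme over the feasible set. -/
theorem stmt16 (m k : ℕ) (hm : 0 < m) (hk : 2 ≤ k)
    (p : Fin k → Vt m → ℝ)
    (hpsum : ∀ g, ∑ v : Vt m, p g v = 1)
    (hp : ∀ g v, 0 < p g v ∧ p g v < 1)
    (θ : Fin k → ℝ) (hθ0 : ∀ g, 0 ≤ θ g) (hθ1 : ∑ g, θ g = 1)
    (pmax pmin c : ℝ)
    (hpmax : pmax = ⨆ g, ⨆ v, p g v)
    (hpmin : pmin = ⨅ g, ⨅ v, p g v)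
    (hc : c = ∑ g : Fin k, θ g * ∑ v : Vt m, ((v : ℤ) : ℝ)^2 * p g v)
    (ε : ℝ) (hε : 0 < ε)
    (hcase : pmax / pmin ≤ Real.exp (2*ε) ∨ pmax = 1/(2*m))
    (lvlstar lgrstar : ℝ)
    (hlvlstar : lvlstar = 0)
    (hlgrstar : lgrstar = 2*m*((k:ℝ) - 1) * pmax
        / (2*m*((k:ℝ) - 1) * pmax + Real.exp ε)) :
    (lgrstar, lvlstar) ∈ Feas k m pmax pmin ε
    ∧ ∀ x ∈ Feas k m pmax pmin ε,
        B3 k m c lgrstar lvlstar ≤ B3 k m c x.1 x.2 := by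
  have hm1 : (1:ℝ) ≤ (m:ℝ) := by exact_mod_cast hm
  have hk2 : (2:ℝ) ≤ (k:ℝ) := by exact_mod_cast hk
  set a := Real.exp ε with ha_def
  have ha : 1 < a := by
    rw [ha_def]; calc (1:ℝ) = Real.exp 0 := Real.exp_zero.symm
    _ < Real.exp ε := Real.exp_lt_exp.mpr hε
  have ha0 : (0:ℝ) < a := by linarith
  haveI : Nonempty (Fin k) := ⟨⟨0, by omega⟩⟩
  have hv1 : (1:ℤ) ∈ Vset m := by
    simp only [Vset, Finset.mem_erase, Finset.mem_Icc]
    omega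
  haveI hVne : Nonempty (Vt m) := ⟨⟨1, hv1⟩⟩
  -- bounds on p
  have g0 : Fin k := ⟨0, by omega⟩
  have v0 : Vt m := ⟨1, hv1⟩
  have hple : ∀ g v, p g v ≤ pmax := by
    intro g v
    rw [hpmax]
    calc p g v ≤ ⨆ v, p g v := le_ciSup (Set.Finite.bddAbove (Set.finite_range _)) v
      _ ≤ ⨆ g, ⨆ v, p g v :=
        le_ciSup (f := fun g => ⨆ v, p g v) (Set.Finite.bddAbove (Set.finite_range _)) g
  have hlep : ∀ g v, pmin ≤ p g v := by
    intro g v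
    rw [hpmin]
    calc ⨅ g, ⨅ v, p g v ≤ ⨅ v, p g v :=
        ciInf_le (f := fun g => ⨅ v, p g v) (Set.Finite.bddBelow (Set.finite_range _)) g
      _ ≤ p g v := ciInf_le (Set.Finite.bddBelow (Set.finite_range _)) v
  have hpmaxpos : 0 < pmax := lt_of_lt_of_le (hp g0 v0).1 (hple g0 v0)
  have hpminpos : 0 < pmin := by
    obtain ⟨g₁, hg₁⟩ := Finite.exists_min (fun g : Fin k => ⨅ v, p g v)
    obtain ⟨v₁, hv₁⟩ := Finite.exists_min (p g₁)
    have hlow : (⨅ v, p g₁ v) ≤ pmin := by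
      rw [hpmin]
      exact le_ciInf hg₁
    have hlow2 : p g₁ v₁ ≤ ⨅ v, p g₁ v := le_ciInf hv₁
    calc (0:ℝ) < p g₁ v₁ := (hp g₁ v₁).1
      _ ≤ pmin := le_trans hlow2 hlow
  -- pmax lower bound facts and ratio
  have hcardV : Fintype.card (Vt m) = 2*m := by
    rw [Fintype.card_coe, Vset_card m hm]
  have hratio : pmax ≤ pmin * a^2 := by
    rcases hcase with h | h
    · have ha2 : Real.exp (2*ε) = a^2 := by
        rw [two_mul, Real.exp_add]; ring
      rw [ha2] at h
      calc pmax = (pmax/pmin) * pmin := by field_simp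
        _ ≤ a^2 * pmin := mul_le_mul_of_nonneg_right h hpminpos.le
        _ = pmin * a^2 := by ring
    · -- pmax = 1/(2m): all p g v equal pmax, so pmin = pmax
      have hall : ∀ g v, p g v = pmax := by
        intro g v
        by_contra hne
        have hlt : p g v < pmax := lt_of_le_of_ne (hple g v) hne
        have hsum : ∑ w : Vt m, p g w < ∑ _w : Vt m, pmax :=
          Finset.sum_lt_sum (fun i _ => hple g i) ⟨v, Finset.mem_univ v, hlt⟩
        rw [hpsum g, Finset.sum_const, Finset.card_univ, hcardV, nsmul_eq_mul, h] at hsum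
        have hm0 : (0:ℝ) < 2*(m:ℝ) := by linarith
        have : ((2*m : ℕ) : ℝ) * (1/(2*(m:ℝ))) = 1 := by
          push_cast
          field_simp
        linarith [this ▸ hsum]
      have hminmax : pmax ≤ pmin := by
        rw [hpmin]
        exact le_ciInf fun g => le_ciInf fun v => (hall g v).ge
      nlinarith [mul_pos hpminpos (show (0:ℝ) < a^2 - 1 by nlinarith)]
  -- feasibility computations
  subst hlvlstar
  have hkk1 : (1:ℝ) ≤ (k:ℝ) - 1 := by linarith
  have hD0 : (0:ℝ) < 2*(m:ℝ) - 1 := by linarith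
  have hApos : (0:ℝ) < 2*(m:ℝ)*((k:ℝ)-1)*pmax :=
    mul_pos (mul_pos (by linarith) (by linarith)) hpmaxpos
  have hApa : (0:ℝ) < 2*(m:ℝ)*((k:ℝ)-1)*pmax + a := by linarith
  have hlgr0 : 0 < lgrstar := by rw [hlgrstar]; exact div_pos hApos hApa
  have hlgr1 : lgrstar < 1 := by
    rw [hlgrstar, div_lt_one hApa]; linarith
  have hB2zero : B2 m 0 = 2*(m:ℝ) - 1 := by rw [B2]; ring
  have hne1 : (2*(m:ℝ) - 1) ≠ 0 := ne_of_gt hD0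
  have hne2 : (2*(m:ℝ)*((k:ℝ)-1)*pmax + a) ≠ 0 := ne_of_gt hApa
  have hne3 : (2*(m:ℝ)*((k:ℝ)-1)*pmax) ≠ 0 := ne_of_gt hApos
  have hne4 : a ≠ 0 := ne_of_gt ha0
  have hne5 : pmax ≠ 0 := ne_of_gt hpmaxpos
  have hne6 : pmin ≠ 0 := ne_of_gt hpminpos
  have hL : B1 k m lgrstar * (pmax * B2 m 0 + 0) = a := by
    rw [B1, hB2zero, hlgrstar]
    field_simp
    ring
  have hR : B1 k m lgrstar * (pmin * B2 m 0 + 0) = a * pmin / pmax := by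
    rw [B1, hB2zero, hlgrstar]
    field_simp
    ring
  have hRle : 1 / (B1 k m lgrstar * (pmin * B2 m 0 + 0)) ≤ a := by
    rw [hR]
    rw [div_div_eq_mul_div, one_mul, div_le_iff₀ (by positivity)]
    calc pmax ≤ pmin * a^2 := hratio
      _ = a * (a * pmin) := by ring
  have hfeas : (lgrstar, (0:ℝ)) ∈ Feas k m pmax pmin ε := by
    refine ⟨⟨hlgr0, hlgr1⟩, ⟨le_refl 0, ?_⟩, ?_⟩
    · have : 1/(2*(m:ℝ)) < 1 := by
        rw [div_lt_one (by linarith)]; linarith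
      simpa using this
    · show max (B1 k m lgrstar * (pmax * B2 m 0 + 0))
        (1 / (B1 k m lgrstar * (pmin * B2 m 0 + 0))) = Real.exp ε
      rw [← ha_def, hL]
      exact max_eq_left hRle
  -- c nonneg
  have hc0 : 0 ≤ c := by
    rw [hc]
    apply Finset.sum_nonneg
    intro g _
    apply mul_nonneg (hθ0 g)
    apply Finset.sum_nonneg
    intro v _
    exact mul_nonneg (sq_nonneg _) (hp g v).1.le
  refine ⟨hfeas, ?_⟩
  rintro ⟨lgr, lvl⟩ ⟨⟨hg0, hg1⟩, ⟨hv0, hv1⟩, hmaxeq⟩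
  have hcon : B1 k m lgr * (pmax * B2 m lvl + lvl) ≤ a := by
    rw [ha_def, ← hmaxeq]
    exact le_max_left _ _
  exact B3_min m k c pmax a lgr lvl lgrstar hm1 hk2 hc0 hpmaxpos ha
    hg0 hg1 hv0 hv1 hlgrstar hcon
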